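/- Let m, c be integers with m a positive integer. Then there exists an integer p with gcd(n,p) = 1 (for any given positive integer n) such that p·c ≡ gcd(m,c) (mod m). -/

import Mathlib

/-- For integers `m > 0` and `c`, and any positive integer `n`, there exists `p` coprime
to `n` with `p * c ≡ gcd(m, c) (mod m)`. -/
theorem exists_coprime_mul_congr_gcd (m c : ℤ) (hm : 0 < m) (n : ℤ) (hn : 0 < n) :
    ∃ p : ℤ, IsCoprime n p ∧ p * c ≡ (Int.gcd m c : ℤ) [ZMOD m] := by
  set g : ℤ := (Int.gcd m c : ℤ) with hg
  have hgnat : 0 < m.gcd c := by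
    refine Nat.pos_of_ne_zero fun h => by simp [Int.gcd_eq_zero_iff.mp h] at hm
  have hgpos : 0 < g := by rw [hg]; exact_mod_cast hgnat
  have hgm : g ∣ m := Int.gcd_dvd_left m c
  have hgc : g ∣ c := Int.gcd_dvd_right m c
  set m' : ℤ := m / g with hm'
  set c' : ℤ := c / g with hc'
  have hmm : g * m' = m := Int.mul_ediv_cancel' hgm
  have hcc : g * c' = c := Int.mul_ediv_cancel' hgc
  have hm'pos : 0 < m' := by
    rcases lt_trichotomy m' 0 with h | h | h
    · nlinarith
    · simp [← hmm, h] at hm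
    · exact h
  have hcop : IsCoprime m' c' := by
    rw [Int.isCoprime_iff_gcd_eq_one]
    exact Int.gcd_div_gcd_div_gcd hgnat
  obtain ⟨u, v, huv⟩ := hcop
  -- v * c' ≡ 1 [ZMOD m'], so v is a unit mod m'
  set q : ℕ := m'.toNat with hq
  have hqpos : 0 < q := by rw [hq]; omega
  haveI : NeZero q := ⟨hqpos.ne'⟩
  have hqm' : (q : ℤ) = m' := Int.toNat_of_nonneg hm'pos.le
  have hm'0 : ((m' : ℤ) : ZMod q) = 0 := by
    rw [← hqm']; exact_mod_cast ZMod.natCast_self q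
  have hunit : IsUnit ((v : ℤ) : ZMod q) := by
    apply IsUnit.of_mul_eq_one ((c' : ℤ) : ZMod q)
    have : ((u * m' + v * c' : ℤ) : ZMod q) = 1 := by rw [huv]; norm_num
    push_cast at this
    rw [hm'0] at this
    linear_combination this
  obtain ⟨p, hpgt, hpprime, hpmod⟩ :=
    Nat.forall_exists_prime_gt_and_eq_mod hunit n.natAbs
  refine ⟨(p : ℤ), ?_, ?_⟩
  · rw [Int.isCoprime_iff_gcd_eq_one]
    have : ¬ (p ∣ n.natAbs) := fun h =>
      absurd (Nat.le_of_dvd (Int.natAbs_pos.mpr hn.ne') h) (not_le.mpr hpgt)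
    have := (Nat.Prime.coprime_iff_not_dvd hpprime).mpr this
    simpa [Int.gcd] using this.symm
  · -- p ≡ v [ZMOD m']
    have hpv : (p : ℤ) ≡ v [ZMOD (q : ℤ)] := by
      rw [Int.ModEq] at *
      have : (((p : ℤ)) : ZMod q) = ((v : ℤ) : ZMod q) := by
        push_cast; exact_mod_cast hpmod
      exact (ZMod.intCast_eq_intCast_iff' _ _ _).mp this
    rw [hqm'] at hpv
    have hdvd : m' ∣ ((p : ℤ) - v) := Int.ModEq.dvd hpv.symm
    -- goal: m ∣ g - p * c
    refine Int.ModEq.symm (Int.modEq_iff_dvd.mpr ?_)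
    have key : (p : ℤ) * c - g = ((p : ℤ) - v) * c' * g - u * (m' * g) := by
      have : v * c' = 1 - u * m' := by linarith [huv]
      calc (p : ℤ) * c - g = ((p : ℤ) - v) * c' * g + (v * c') * g - g := by
            rw [← hcc]; ring
        _ = ((p : ℤ) - v) * c' * g - u * (m' * g) := by rw [this]; ring
    have hmg : m' * g = m := by rw [mul_comm]; exact hmm
    rw [key, hmg]
    exact dvd_sub (by rw [← hmg]; exact mul_dvd_mul (hdvd.mul_right c') dvd_rfl) (Dvd.intro_left u rfl)
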